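/- For μ > 0, λ > 0 and any (k, l) ≠ (0,0), the scalar Schur complement 1/λ + [−ik, −il] · M⁻¹ · [ik, il]ᵀ, where M = [[2μk² + μl², μkl],[μkl, 2μl² + μk²]], equals 1/λ + 1/(2μ), independent of k and l. -/

import Mathlib

open Matrix

theorem stmt_19 (μ lam k l : ℝ) (hμ : 0 < μ) (hlam : 0 < lam)
    (hkl : (k, l) ≠ (0, 0)) :
    1 / (lam : ℂ) +
      ![-(Complex.I * k), -(Complex.I * l)] ⬝ᵥ
        (((!![2 * μ * k ^ 2 + μ * l ^ 2, μ * k * l;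
              μ * k * l, 2 * μ * l ^ 2 + μ * k ^ 2]).map (Complex.ofReal))⁻¹ *ᵥ
          ![Complex.I * k, Complex.I * l]) =
      1 / (lam : ℂ) + 1 / (2 * (μ : ℂ)) := by
  have hne : k ≠ 0 ∨ l ≠ 0 := by
    by_contra h
    push_neg at h
    exact hkl (by simp [h.1, h.2])
  have hpos : 0 < k ^ 2 + l ^ 2 := by
    rcases hne with h | h <;> positivity
  have hmap : (!![2 * μ * k ^ 2 + μ * l ^ 2, μ * k * l;
              μ * k * l, 2 * μ * l ^ 2 + μ * k ^ 2]).map (Complex.ofReal) =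
      !![(2 * μ * k ^ 2 + μ * l ^ 2 : ℂ), μ * k * l;
              μ * k * l, 2 * μ * l ^ 2 + μ * k ^ 2] := by
    ext i j
    fin_cases i <;> fin_cases j <;> simp
  have hdet : ((2 * μ * k ^ 2 + μ * l ^ 2 : ℂ) * (2 * μ * l ^ 2 + μ * k ^ 2) -
      μ * k * l * (μ * k * l)) ≠ 0 := by
    have : ((2 * μ * k ^ 2 + μ * l ^ 2 : ℂ) * (2 * μ * l ^ 2 + μ * k ^ 2) -
        μ * k * l * (μ * k * l)) = ((2 * μ ^ 2 * (k ^ 2 + l ^ 2) ^ 2 : ℝ) : ℂ) := by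
      push_cast; ring
    rw [this]
    exact_mod_cast (by positivity : (2 * μ ^ 2 * (k ^ 2 + l ^ 2) ^ 2 : ℝ) ≠ 0)
  have hμ' : (μ : ℂ) ≠ 0 := by exact_mod_cast hμ.ne'
  have hkl' : ((k ^ 2 + l ^ 2 : ℝ) : ℂ) ≠ 0 := by exact_mod_cast hpos.ne'
  rw [hmap, Matrix.inv_def, Matrix.adjugate_fin_two, Matrix.det_fin_two]
  simp only [Ring.inverse_eq_inv', Matrix.smul_mulVec, Matrix.mulVec,
    dotProduct, Fin.sum_univ_two, Matrix.cons_val', Matrix.cons_val_zero,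
    Matrix.cons_val_one, Matrix.head_cons, Matrix.empty_val', Matrix.cons_val_fin_one,
    Matrix.head_fin_const, Pi.smul_apply, smul_eq_mul, Matrix.of_apply, Matrix.smul_apply]
  have hlam' : (lam : ℂ) ≠ 0 := by exact_mod_cast hlam.ne'
  field_simp
  ring_nf
  simp only [Complex.I_sq]
  have hq : ((k:ℂ) ^ 2 * l ^ 2 * 4 + k ^ 4 * 2 + l ^ 4 * 2) ≠ 0 := by
    have : ((k:ℂ) ^ 2 * l ^ 2 * 4 + k ^ 4 * 2 + l ^ 4 * 2) = 2 * ((k ^ 2 + l ^ 2 : ℝ) : ℂ) ^ 2 := by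
      push_cast; ring
    rw [this]; exact mul_ne_zero two_ne_zero (pow_ne_zero _ hkl')
  linear_combination (lam : ℂ) * (mul_inv_cancel₀ hq)
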